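/- Let X_1, …, X_5, Y_1, Y_2, Z be mutually independent random variables with X_i ~ Poiss(λ_i) (λ_i > 0), Y_j ~ Poiss(η_j) (η_j > 0), Z ~ Poiss(γ) (γ > 0). Set μ = λ_1 + ⋯ + λ_5, η = η_1 + η_2, and S = (X_1 + ⋯ + X_5) + 2(Y_1 + Y_2) + 4Z. Fix K ∈ ℕ with P(S = K) > 0. Then for all nonnegative integers x_1,…,x_5, y_1, y_2, z, writing k_1 = x_1 + ⋯ + x_5, k_2 = y_1 + y_2, k_4 = z, and assuming k_1 + 2k_2 + 4k_4 = K, one has P(X = x, Y = y, Z = z | S = K) = [k_1!/(x_1!⋯x_5!)·∏_{i=1}^5 (λ_i/μ)^{x_i}] · [k_2!/(y_1!·y_2!)·(η_1/η)^{y_1}(η_2/η)^{y_2}] · 𝕃(k_1,k_2,k_4), where 𝕃(k_1,k_2,k_4) = (μ^{k_1}/k_1!)(η^{k_2}/k_2!)(γ^{k_4}/k_4!) / Σ_{k_1'+2k_2'+4k_4'=K} (μ^{k_1'}/k_1'!)(η^{k_2'}/k_2'!)(γ^{k_4'}/k_4'!). -/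

import Mathlib

open MeasureTheory ProbabilityTheory Finset NNReal

/-- The denominator of the lucky law: the sum of `μ^{k₁'}/k₁'! · η^{k₂'}/k₂'! · γ^{k₄'}/k₄'!`
over all triples of nonnegative integers `(k₁', k₂', k₄')` with `k₁' + 2k₂' + 4k₄' = K`
(all such triples have entries `≤ K`). -/
noncomputable def luckyDenom (μ η γ : ℝ) (K : ℕ) : ℝ :=
  ∑ t ∈ (Finset.range (K + 1) ×ˢ Finset.range (K + 1) ×ˢ Finset.range (K + 1)).filter
      (fun t => t.1 + 2 * t.2.1 + 4 * t.2.2 = K),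
    μ ^ t.1 / (Nat.factorial t.1 : ℝ) * (η ^ t.2.1 / (Nat.factorial t.2.1 : ℝ)) *
      (γ ^ t.2.2 / (Nat.factorial t.2.2 : ℝ))

/-- The lucky law `𝕃(k₁, k₂, k₄)`. -/
noncomputable def luckyLaw (μ η γ : ℝ) (K k₁ k₂ k₄ : ℕ) : ℝ :=
  (μ ^ k₁ / (Nat.factorial k₁ : ℝ) * (η ^ k₂ / (Nat.factorial k₂ : ℝ)) *
      (γ ^ k₄ / (Nat.factorial k₄ : ℝ))) / luckyDenom μ η γ K

open Real

lemma poisson_singleton' (r : ℝ≥0) (n : ℕ) :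
    poissonMeasure r {n} = ENNReal.ofReal (poissonPMFReal r n) := by
  rw [poissonMeasure_singleton]
  rfl

lemma pi_poisson_singleton' {ι : Type*} [Fintype ι] (lam : ι → ℝ≥0) (x : ι → ℕ) :
    (Measure.pi fun i => poissonMeasure (lam i)) {x} =
      ENNReal.ofReal (∏ i, poissonPMFReal (lam i) (x i)) := by
  rw [← Set.univ_pi_singleton, Measure.pi_pi,
    ENNReal.ofReal_prod_of_nonneg (fun i _ => poissonPMFReal_nonneg)]
  exact Finset.prod_congr rfl fun i _ => poisson_singleton' _ _

lemma sum_prod_pmf' {ι : Type*} [Fintype ι] [DecidableEq ι] (lam : ι → ℝ≥0) (k : ℕ) :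
    ∑ x ∈ piAntidiag (univ : Finset ι) k, ∏ i, poissonPMFReal (lam i) (x i)
      = poissonPMFReal (∑ i, lam i) k := by
  unfold poissonPMFReal
  push_cast
  have h1 : ∀ x ∈ piAntidiag (univ : Finset ι) k,
      ∏ i, (rexp (-(lam i : ℝ)) * (lam i : ℝ) ^ x i / (Nat.factorial (x i) : ℝ))
        = rexp (-∑ i, (lam i : ℝ)) * ∏ i, ((lam i : ℝ) ^ x i / (Nat.factorial (x i) : ℝ)) := by
    intro x hx
    rw [Finset.prod_div_distrib, Finset.prod_mul_distrib, ← Real.exp_sum, ← Finset.sum_neg_distrib,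
      Finset.prod_div_distrib, mul_div_assoc]
  rw [Finset.sum_congr rfl h1, ← Finset.mul_sum, mul_div_assoc]
  congr 1
  have hmul : ∑ x ∈ piAntidiag (univ : Finset ι) k,
      ∏ i, ((lam i : ℝ) ^ x i / (Nat.factorial (x i) : ℝ))
      = (∑ i, (lam i : ℝ)) ^ k / (Nat.factorial k : ℝ) := by
    rw [Finset.sum_pow_eq_sum_piAntidiag, Finset.sum_div]
    refine Finset.sum_congr rfl fun x hx => ?_
    rw [Finset.mem_piAntidiag] at hx
    have hfac : ((∏ i, Nat.factorial (x i)) * Nat.multinomial univ x : ℕ) = Nat.factorial k := by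
      rw [Nat.multinomial_spec, hx.1]
    rw [Finset.prod_div_distrib]
    have h2 : (Nat.factorial k : ℝ)
        = (∏ i, (Nat.factorial (x i) : ℝ)) * (Nat.multinomial univ x : ℝ) := by
      rw [← hfac]; push_cast; ring
    rw [h2]
    have h3 : (∏ i, (Nat.factorial (x i) : ℝ)) ≠ 0 := by positivity
    have hm : (Nat.multinomial univ x : ℝ) ≠ 0 := by
      exact_mod_cast (Nat.multinomial_pos (s := univ) (f := x)).ne'
    field_simp
  rw [hmul]

lemma pi_poisson_sum' {ι : Type*} [Fintype ι] [DecidableEq ι] (lam : ι → ℝ≥0) (k : ℕ) :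
    (Measure.pi fun i => poissonMeasure (lam i)) {x : ι → ℕ | ∑ i, x i = k} =
      ENNReal.ofReal (poissonPMFReal (∑ i, lam i) k) := by
  have hms : MeasurableSet {x : ι → ℕ | ∑ i, x i = k} := (Set.to_countable _).measurableSet
  rw [← Measure.tsum_indicator_apply_singleton _ _ hms]
  rw [tsum_eq_sum (s := piAntidiag (univ : Finset ι) k)
    (fun x hx => Set.indicator_of_notMem (fun hmem => hx (by
      rw [Finset.mem_piAntidiag]; exact ⟨hmem, fun i _ => Finset.mem_univ i⟩)) _)]
  rw [Finset.sum_congr rfl (fun x hx => ?_), ← ENNReal.ofReal_sum_of_nonneg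
    (fun x _ => Finset.prod_nonneg fun i _ => poissonPMFReal_nonneg), sum_prod_pmf']
  rw [Set.indicator_of_mem (by simpa using (Finset.mem_piAntidiag.mp hx).1),
    pi_poisson_singleton']

lemma measure_event' (lam : Fin 5 → ℝ≥0) (eta : Fin 2 → ℝ≥0) (gam : ℝ≥0) (K : ℕ) :
    ((Measure.pi fun i => poissonMeasure (lam i)).prod
        ((Measure.pi fun j => poissonMeasure (eta j)).prod (poissonMeasure gam)))
      {p : (Fin 5 → ℕ) × (Fin 2 → ℕ) × ℕ |
        (∑ i, p.1 i) + 2 * (∑ j, p.2.1 j) + 4 * p.2.2 = K}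
    = ENNReal.ofReal
        (rexp (-(((∑ i, lam i : ℝ≥0) : ℝ) + ((∑ j, eta j : ℝ≥0) : ℝ) + (gam : ℝ))) *
          luckyDenom ((∑ i, lam i : ℝ≥0) : ℝ) ((∑ j, eta j : ℝ≥0) : ℝ) (gam : ℝ) K) := by
  classical
  set T := (Finset.range (K + 1) ×ˢ Finset.range (K + 1) ×ˢ Finset.range (K + 1)).filter
      (fun t : ℕ × ℕ × ℕ => t.1 + 2 * t.2.1 + 4 * t.2.2 = K) with hT
  have hA : {p : (Fin 5 → ℕ) × (Fin 2 → ℕ) × ℕ |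
        (∑ i, p.1 i) + 2 * (∑ j, p.2.1 j) + 4 * p.2.2 = K}
      = ⋃ t ∈ T, ({x : Fin 5 → ℕ | ∑ i, x i = t.1} ×ˢ
          ({y : Fin 2 → ℕ | ∑ j, y j = t.2.1} ×ˢ ({t.2.2} : Set ℕ))) := by
    ext p
    simp only [Set.mem_setOf_eq, Set.mem_iUnion, Set.mem_prod, Set.mem_singleton_iff, hT,
      Finset.mem_filter, Finset.mem_product, Finset.mem_range]
    constructor
    · intro h
      refine ⟨(∑ i, p.1 i, ∑ j, p.2.1 j, p.2.2), ⟨⟨?_, ?_, ?_⟩, ?_⟩, rfl, rfl, rfl⟩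
      · show ∑ i, p.1 i < K + 1; omega
      · show ∑ j, p.2.1 j < K + 1; omega
      · show p.2.2 < K + 1; omega
      · exact h
    · rintro ⟨t, ⟨-, ht⟩, h1, h2, h3⟩
      rw [h1, h2, h3]; exact ht
  rw [hA, measure_biUnion_finset ?hd fun t _ => (Set.to_countable _).measurableSet]
  case hd =>
    intro t ht t' ht' hne
    refine Set.disjoint_left.mpr fun p hp hp' => hne ?_
    obtain ⟨a1, a2, a3⟩ := hp
    obtain ⟨b1, b2, b3⟩ := hp'
    simp only [Set.mem_setOf_eq, Set.mem_singleton_iff] at a1 a2 a3 b1 b2 b3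
    exact Prod.ext (a1 ▸ b1) (Prod.ext (a2 ▸ b2) (a3 ▸ b3))
  have hterm : ∀ t ∈ T,
      ((Measure.pi fun i => poissonMeasure (lam i)).prod
        ((Measure.pi fun j => poissonMeasure (eta j)).prod (poissonMeasure gam)))
        ({x : Fin 5 → ℕ | ∑ i, x i = t.1} ×ˢ
          ({y : Fin 2 → ℕ | ∑ j, y j = t.2.1} ×ˢ ({t.2.2} : Set ℕ)))
      = ENNReal.ofReal (poissonPMFReal (∑ i, lam i) t.1 *
          (poissonPMFReal (∑ j, eta j) t.2.1 * poissonPMFReal gam t.2.2)) := by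
    intro t _
    rw [Measure.prod_prod, Measure.prod_prod, pi_poisson_sum', pi_poisson_sum',
      poisson_singleton', ← ENNReal.ofReal_mul poissonPMFReal_nonneg,
      ← ENNReal.ofReal_mul poissonPMFReal_nonneg]
  rw [Finset.sum_congr rfl hterm, ← ENNReal.ofReal_sum_of_nonneg (fun t _ =>
    mul_nonneg poissonPMFReal_nonneg (mul_nonneg poissonPMFReal_nonneg poissonPMFReal_nonneg))]
  congr 1
  rw [luckyDenom, Finset.mul_sum]
  refine Finset.sum_congr rfl fun t _ => ?_
  unfold poissonPMFReal
  have hexp : rexp (-((∑ i, lam i : ℝ≥0) : ℝ)) * (rexp (-((∑ j, eta j : ℝ≥0) : ℝ)) *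
      rexp (-(gam : ℝ)))
      = rexp (-(((∑ i, lam i : ℝ≥0) : ℝ) + ((∑ j, eta j : ℝ≥0) : ℝ) + (gam : ℝ))) := by
    rw [← Real.exp_add, ← Real.exp_add]; ring_nf
  rw [← hexp]; push_cast; ring

/-- The approximate fine structure law with `K` additional neutrons: conditionally on
`S = (X₁+⋯+X₅) + 2(Y₁+Y₂) + 4Z = K`, the probability of a fine configuration
`(x, y, z)` with groupings `k₁ = ∑ xᵢ`, `k₂ = y₁ + y₂`, `k₄ = z` and
`k₁ + 2k₂ + 4k₄ = K` is the product of two multinomial probabilities weighted by the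
lucky law `𝕃(k₁, k₂, k₄)`. -/
theorem fine_structure_law
    (lam : Fin 5 → ℝ≥0) (hlam : ∀ i, 0 < lam i)
    (eta : Fin 2 → ℝ≥0) (heta : ∀ j, 0 < eta j)
    (gam : ℝ≥0) (hgam : 0 < gam) (K : ℕ)
    (hK : 0 < ((Measure.pi fun i => poissonMeasure (lam i)).prod
        ((Measure.pi fun j => poissonMeasure (eta j)).prod (poissonMeasure gam)))
        {p : (Fin 5 → ℕ) × (Fin 2 → ℕ) × ℕ |
          (∑ i, p.1 i) + 2 * (∑ j, p.2.1 j) + 4 * p.2.2 = K})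
    (x : Fin 5 → ℕ) (y : Fin 2 → ℕ) (z : ℕ)
    (k₁ k₂ k₄ : ℕ) (hk₁ : k₁ = ∑ i, x i) (hk₂ : k₂ = y 0 + y 1) (hk₄ : k₄ = z)
    (hcon : k₁ + 2 * k₂ + 4 * k₄ = K) :
    ((Measure.pi fun i => poissonMeasure (lam i)).prod
        ((Measure.pi fun j => poissonMeasure (eta j)).prod (poissonMeasure gam)))[|
      {p : (Fin 5 → ℕ) × (Fin 2 → ℕ) × ℕ |
        (∑ i, p.1 i) + 2 * (∑ j, p.2.1 j) + 4 * p.2.2 = K}] {(x, y, z)}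
      = ENNReal.ofReal
          (((Nat.factorial k₁ : ℝ) / ∏ i, (Nat.factorial (x i) : ℝ)) *
              (∏ i, ((lam i : ℝ) / (∑ i', (lam i' : ℝ))) ^ x i) *
            (((Nat.factorial k₂ : ℝ) /
                ((Nat.factorial (y 0) : ℝ) * (Nat.factorial (y 1) : ℝ))) *
              ((eta 0 : ℝ) / ((eta 0 : ℝ) + (eta 1 : ℝ))) ^ y 0 *
              ((eta 1 : ℝ) / ((eta 0 : ℝ) + (eta 1 : ℝ))) ^ y 1) *
            luckyLaw (∑ i, (lam i : ℝ)) ((eta 0 : ℝ) + (eta 1 : ℝ)) (gam : ℝ) K k₁ k₂ k₄) := by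
  classical
  have hμ : ((∑ i, lam i : ℝ≥0) : ℝ) = ∑ i, (lam i : ℝ) := by push_cast; rfl
  have hη : ((∑ j, eta j : ℝ≥0) : ℝ) = (eta 0 : ℝ) + (eta 1 : ℝ) := by
    rw [Fin.sum_univ_two]; push_cast; rfl
  have hμpos : (0 : ℝ) < ∑ i, (lam i : ℝ) :=
    Finset.sum_pos (fun i _ => by exact_mod_cast hlam i) ⟨0, Finset.mem_univ 0⟩
  have hηpos : (0 : ℝ) < (eta 0 : ℝ) + (eta 1 : ℝ) := by
    have := heta 0; have := heta 1; positivity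
  have hγpos : (0 : ℝ) < (gam : ℝ) := hgam
  set μR : ℝ := ∑ i, (lam i : ℝ) with hμR
  set ηR : ℝ := (eta 0 : ℝ) + (eta 1 : ℝ) with hηR
  have hDpos : 0 < luckyDenom μR ηR (gam : ℝ) K := by
    rw [luckyDenom]
    refine Finset.sum_pos' (fun t _ => by positivity) ⟨(k₁, k₂, k₄), ?_, by positivity⟩
    simp only [Finset.mem_filter, Finset.mem_product, Finset.mem_range]
    exact ⟨⟨by omega, by omega, by omega⟩, hcon⟩
  -- the event is measurable
  have hms : MeasurableSet {p : (Fin 5 → ℕ) × (Fin 2 → ℕ) × ℕ |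
      (∑ i, p.1 i) + 2 * (∑ j, p.2.1 j) + 4 * p.2.2 = K} :=
    (Set.to_countable _).measurableSet
  rw [ProbabilityTheory.cond_apply hms]
  have hmem : ((x, y, z) : (Fin 5 → ℕ) × (Fin 2 → ℕ) × ℕ) ∈ {p : (Fin 5 → ℕ) × (Fin 2 → ℕ) × ℕ |
      (∑ i, p.1 i) + 2 * (∑ j, p.2.1 j) + 4 * p.2.2 = K} := by
    show (∑ i, x i) + 2 * (∑ j, y j) + 4 * z = K
    have h2 : ∑ j, y j = y 0 + y 1 := Fin.sum_univ_two y
    omega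
  rw [Set.inter_eq_self_of_subset_right (Set.singleton_subset_iff.mpr hmem)]
  -- singleton measure
  have hsingle : ((Measure.pi fun i => poissonMeasure (lam i)).prod
        ((Measure.pi fun j => poissonMeasure (eta j)).prod (poissonMeasure gam)))
        {((x, y, z) : (Fin 5 → ℕ) × (Fin 2 → ℕ) × ℕ)}
      = ENNReal.ofReal ((∏ i, poissonPMFReal (lam i) (x i)) *
          ((∏ j, poissonPMFReal (eta j) (y j)) * poissonPMFReal gam z)) := by
    rw [← Set.singleton_prod_singleton, ← Set.singleton_prod_singleton,
      Measure.prod_prod, Measure.prod_prod, pi_poisson_singleton', pi_poisson_singleton',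
      poisson_singleton', ← ENNReal.ofReal_mul (Finset.prod_nonneg fun _ _ =>
        poissonPMFReal_nonneg),
      ← ENNReal.ofReal_mul (Finset.prod_nonneg fun _ _ => poissonPMFReal_nonneg)]
  rw [hsingle, measure_event' lam eta gam K, hμ, hη]
  set T : ℝ := μR + ηR + (gam : ℝ) with hTdef
  set D : ℝ := luckyDenom μR ηR (gam : ℝ) K with hD
  -- rewrite singleton pmf product as exp(-T) * N'
  have hN : (∏ i, poissonPMFReal (lam i) (x i)) *
        ((∏ j, poissonPMFReal (eta j) (y j)) * poissonPMFReal gam z)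
      = rexp (-T) * ((∏ i, ((lam i : ℝ) ^ x i / (Nat.factorial (x i) : ℝ))) *
          ((∏ j, ((eta j : ℝ) ^ y j / (Nat.factorial (y j) : ℝ))) *
            ((gam : ℝ) ^ z / (Nat.factorial z : ℝ)))) := by
    unfold poissonPMFReal
    have e1 : ∏ i, (rexp (-(lam i : ℝ)) * (lam i : ℝ) ^ x i / (Nat.factorial (x i) : ℝ))
        = rexp (-μR) * ∏ i, ((lam i : ℝ) ^ x i / (Nat.factorial (x i) : ℝ)) := by
      rw [Finset.prod_div_distrib, Finset.prod_mul_distrib, ← Real.exp_sum,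
        Finset.prod_div_distrib, mul_div_assoc]
      congr 2
      rw [hμR, ← Finset.sum_neg_distrib]
    have e2 : ∏ j, (rexp (-(eta j : ℝ)) * (eta j : ℝ) ^ y j / (Nat.factorial (y j) : ℝ))
        = rexp (-ηR) * ∏ j, ((eta j : ℝ) ^ y j / (Nat.factorial (y j) : ℝ)) := by
      rw [Finset.prod_div_distrib, Finset.prod_mul_distrib, ← Real.exp_sum,
        Finset.prod_div_distrib, mul_div_assoc]
      congr 2
      rw [Fin.sum_univ_two, hηR]
      ring
    have hexp : rexp (-μR) * (rexp (-ηR) * rexp (-(gam : ℝ))) = rexp (-T) := by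
      rw [← Real.exp_add, ← Real.exp_add, hTdef]; ring_nf
    rw [e1, e2, ← hexp]; ring
  rw [hN]
  -- now pure ENNReal/real manipulation
  have hexpTpos : (0 : ℝ) < rexp (-T) := Real.exp_pos _
  rw [← ENNReal.ofReal_inv_of_pos (show (0:ℝ) < rexp (-T) * D by positivity),
    ← ENNReal.ofReal_mul (by positivity)]
  congr 1
  subst hk₁ hk₂
  rw [hk₄]
  rw [luckyLaw, ← hD]
  have hfx : (∏ i, (Nat.factorial (x i) : ℝ)) ≠ 0 := by positivity
  have hfy0 : ((Nat.factorial (y 0) : ℝ)) ≠ 0 := by positivity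
  have hfy1 : ((Nat.factorial (y 1) : ℝ)) ≠ 0 := by positivity
  have hfz : ((Nat.factorial z : ℝ)) ≠ 0 := by positivity
  have hprodlam : ∏ i, ((lam i : ℝ) / μR) ^ x i
      = (∏ i, (lam i : ℝ) ^ x i) / μR ^ (∑ i, x i) := by
    simp only [div_pow, Finset.prod_div_distrib, Finset.prod_pow_eq_pow_sum]
  have hprodY : ∏ j, ((eta j : ℝ) ^ y j / (Nat.factorial (y j) : ℝ))
      = (eta 0 : ℝ) ^ y 0 / (Nat.factorial (y 0) : ℝ) *
        ((eta 1 : ℝ) ^ y 1 / (Nat.factorial (y 1) : ℝ)) := Fin.prod_univ_two _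
  rw [hprodlam, hprodY]
  have hk1fac : ((Nat.factorial (∑ i, x i) : ℝ)) ≠ 0 := by positivity
  have hk2fac : ((Nat.factorial (y 0 + y 1) : ℝ)) ≠ 0 := by positivity
  field_simp
  rw [Finset.prod_div_distrib, div_pow, div_pow, pow_add]
  field_simp
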